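/- Let g(x) ∈ ℂ[x] have degree n ≥ 1 and consider ℂ[x] as a module over the polynomial ring ℂ[H] where H acts by H·f = x f' + x g' f + (1/2) f. Then ℂ[x] is a free ℂ[H]-module of rank n with basis {1, x, ..., x^{n-1}}. -/

import Mathlib

open Polynomial

/-- The operator `H = x∂ + x g'(x) + 1/2` on `ℂ[x]`, i.e.
`H·f = x f' + x g' f + (1/2) f`, as a `ℂ`-linear endomorphism. -/
noncomputable def Hop (g : Polynomial ℂ) : Module.End ℂ (Polynomial ℂ) :=
  (LinearMap.mulLeft ℂ (X : Polynomial ℂ)).comp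
      (derivative : Polynomial ℂ →ₗ[ℂ] Polynomial ℂ)
    + LinearMap.mulLeft ℂ ((X : Polynomial ℂ) * derivative g)
    + ((1:ℂ)/2) • LinearMap.id

/-- Let `g ∈ ℂ[x]` have degree `n ≥ 1`. Then `ℂ[x]`, regarded as a module over the
polynomial ring `ℂ[H]` via the action `H·f = x f' + x g' f + (1/2) f`, is free of rank
`n` with basis `{1, x, …, x^{n-1}}`: these elements generate `ℂ[x]` over `ℂ[H]` and are
`ℂ[H]`-linearly independent. -/
lemma hop_apply (g f : Polynomial ℂ) :
    Hop g f = X * derivative f + (X * derivative g) * f + ((1:ℂ)/2) • f := by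
  simp [Hop, mul_assoc]

lemma A_coeff {g : Polynomial ℂ} {n : ℕ} (hn : 1 ≤ n) (hdeg : g.natDegree = n) :
    ((X : Polynomial ℂ) * derivative g).coeff n = n * g.leadingCoeff := by
  obtain ⟨k, rfl⟩ : ∃ k, n = k + 1 := ⟨n - 1, by omega⟩
  have h1 : g.coeff (k + 1) = g.leadingCoeff := by rw [← hdeg]; exact coeff_natDegree
  rw [coeff_X_mul, coeff_derivative, h1]
  push_cast
  ring

lemma A_natDegree_le {g : Polynomial ℂ} {n : ℕ} (hn : 1 ≤ n) (hdeg : g.natDegree = n) :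
    ((X : Polynomial ℂ) * derivative g).natDegree ≤ n := by
  refine (natDegree_mul_le).trans ?_
  have h := Polynomial.natDegree_derivative_le g
  rw [hdeg] at h
  simp only [natDegree_X]
  omega

lemma A_natDegree {g : Polynomial ℂ} {n : ℕ} (hn : 1 ≤ n) (hdeg : g.natDegree = n) :
    ((X : Polynomial ℂ) * derivative g).natDegree = n := by
  refine le_antisymm (A_natDegree_le hn hdeg) (le_natDegree_of_ne_zero ?_)
  rw [A_coeff hn hdeg]
  have hg : g.leadingCoeff ≠ 0 := by
    rw [Ne, leadingCoeff_eq_zero]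
    intro h; rw [h] at hdeg; simp at hdeg; omega
  have : (n : ℂ) ≠ 0 := Nat.cast_ne_zero.mpr (by omega)
  exact mul_ne_zero this hg

lemma hop_natDegree_le {g : Polynomial ℂ} {n : ℕ} (hn : 1 ≤ n) (hdeg : g.natDegree = n)
    (f : Polynomial ℂ) : (Hop g f).natDegree ≤ f.natDegree + n := by
  rw [hop_apply]
  refine (natDegree_add_le _ _).trans (max_le ((natDegree_add_le _ _).trans (max_le ?_ ?_)) ?_)
  · refine natDegree_mul_le.trans ?_
    have h := Polynomial.natDegree_derivative_le f
    simp only [natDegree_X]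
    omega
  · refine natDegree_mul_le.trans ?_
    have h := A_natDegree_le hn hdeg (g := g)
    omega
  · exact (natDegree_smul_le _ _).trans (by omega)

lemma hop_coeff {g : Polynomial ℂ} {n : ℕ} (hn : 1 ≤ n) (hdeg : g.natDegree = n)
    (f : Polynomial ℂ) {j : ℕ} (hj : f.natDegree ≤ j) :
    (Hop g f).coeff (j + n) = (n : ℂ) * g.leadingCoeff * f.coeff j := by
  rw [hop_apply, coeff_add, coeff_add]
  have h1 : (X * derivative f).coeff (j + n) = 0 := by
    by_cases hf' : derivative f = 0
    · simp [hf']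
    · have hne : f.natDegree ≠ 0 := by
        intro h0
        apply hf'
        have : f = C (f.coeff 0) := eq_C_of_natDegree_eq_zero h0
        rw [this, derivative_C]
      have h : (derivative f).natDegree < f.natDegree := natDegree_derivative_lt hne
      apply coeff_eq_zero_of_natDegree_lt
      refine lt_of_le_of_lt natDegree_mul_le ?_
      simp only [natDegree_X]
      omega
  have h2 : (((1:ℂ)/2) • f).coeff (j + n) = 0 := by
    apply coeff_eq_zero_of_natDegree_lt
    refine lt_of_le_of_lt (natDegree_smul_le _ _) (by omega)
  rw [h1, h2, zero_add, add_zero]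
  rcases lt_or_eq_of_le hj with hlt | heq
  · have hz : f.coeff j = 0 := coeff_eq_zero_of_natDegree_lt hlt
    have : ((X * derivative g) * f).coeff (j + n) = 0 := by
      apply coeff_eq_zero_of_natDegree_lt
      refine lt_of_le_of_lt natDegree_mul_le ?_
      have := A_natDegree_le hn hdeg (g := g)
      omega
    rw [this, hz, mul_zero]
  · subst heq
    have key := Polynomial.coeff_mul_degree_add_degree (X * derivative g) f
    rw [A_natDegree hn hdeg] at key
    rw [add_comm n f.natDegree] at key
    rw [key]
    have hlc : (X * derivative g).leadingCoeff = (n : ℂ) * g.leadingCoeff := by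
      rw [leadingCoeff, A_natDegree hn hdeg, A_coeff hn hdeg]
    rw [hlc, leadingCoeff]
    rfl

lemma hop_pow_natDegree_le {g : Polynomial ℂ} {n : ℕ} (hn : 1 ≤ n) (hdeg : g.natDegree = n)
    (i : ℕ) (f : Polynomial ℂ) : (((Hop g) ^ i) f).natDegree ≤ f.natDegree + i * n := by
  induction i generalizing f with
  | zero => simp
  | succ i ih =>
    rw [pow_succ, Module.End.mul_apply]
    calc (((Hop g) ^ i) (Hop g f)).natDegree ≤ (Hop g f).natDegree + i * n := ih _
      _ ≤ f.natDegree + n + i * n := by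
          have := hop_natDegree_le hn hdeg f
          omega
      _ = f.natDegree + (i + 1) * n := by ring

lemma hop_pow_coeff {g : Polynomial ℂ} {n : ℕ} (hn : 1 ≤ n) (hdeg : g.natDegree = n)
    (i : ℕ) (f : Polynomial ℂ) {j : ℕ} (hj : f.natDegree ≤ j) :
    (((Hop g) ^ i) f).coeff (j + i * n) = ((n : ℂ) * g.leadingCoeff) ^ i * f.coeff j := by
  induction i generalizing f j with
  | zero => simp
  | succ i ih =>
    rw [pow_succ, Module.End.mul_apply]
    have hj' : (Hop g f).natDegree ≤ j + n := (hop_natDegree_le hn hdeg f).trans (by omega)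
    have : j + (i + 1) * n = (j + n) + i * n := by ring
    rw [this, ih (Hop g f) hj', hop_coeff hn hdeg f hj, pow_succ]
    ring

lemma aeval_natDegree_le {g : Polynomial ℂ} {n : ℕ} (hn : 1 ≤ n) (hdeg : g.natDegree = n)
    (N : ℕ) (c : Polynomial ℂ) (hc : c.natDegree ≤ N) (f : Polynomial ℂ) :
    ((Polynomial.aeval (Hop g) c) f).natDegree ≤ N * n + f.natDegree := by
  revert c
  refine Polynomial.induction_with_natDegree_le
    (fun c => ((Polynomial.aeval (Hop g) c) f).natDegree ≤ N * n + f.natDegree) N ?_ ?_ ?_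
  · simp
  · intro k r _ hk
    rw [map_mul, aeval_C, map_pow, aeval_X]
    calc ((algebraMap ℂ (Module.End ℂ (Polynomial ℂ)) r * (Hop g) ^ k) f).natDegree
        = (r • (((Hop g) ^ k) f)).natDegree := by
          rw [Module.End.mul_apply, Module.algebraMap_end_apply]
      _ ≤ (((Hop g) ^ k) f).natDegree := natDegree_smul_le _ _
      _ ≤ f.natDegree + k * n := hop_pow_natDegree_le hn hdeg k f
      _ ≤ N * n + f.natDegree := by
          have : k * n ≤ N * n := Nat.mul_le_mul_right n hk
          omega
  · intro p q _ _ hp hq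
    rw [map_add, LinearMap.add_apply]
    exact (natDegree_add_le _ _).trans (max_le hp hq)

lemma aeval_C_mul_X_pow (g : Polynomial ℂ) (a : ℂ) (d : ℕ) (v : Polynomial ℂ) :
    (Polynomial.aeval (Hop g) (C a * X ^ d)) v = a • (((Hop g) ^ d) v) := by
  rw [map_mul, aeval_C, map_pow, aeval_X, Module.End.mul_apply, Module.algebraMap_end_apply]

lemma aeval_coeff {g : Polynomial ℂ} {n : ℕ} (hn : 1 ≤ n) (hdeg : g.natDegree = n)
    (c : Polynomial ℂ) (f : Polynomial ℂ) {j : ℕ} (hj : f.natDegree ≤ j) :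
    ((Polynomial.aeval (Hop g) c) f).coeff (j + c.natDegree * n)
      = c.leadingCoeff * ((n : ℂ) * g.leadingCoeff) ^ c.natDegree * f.coeff j := by
  by_cases hc : c = 0
  · simp [hc]
  · have hdecomp : (Polynomial.aeval (Hop g) c) f
        = (Polynomial.aeval (Hop g) c.eraseLead) f
          + c.leadingCoeff • (((Hop g) ^ c.natDegree) f) := by
      conv_lhs => rw [← eraseLead_add_C_mul_X_pow c]
      rw [map_add, LinearMap.add_apply, aeval_C_mul_X_pow]
    rw [hdecomp, coeff_add, coeff_smul, hop_pow_coeff hn hdeg _ f hj]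
    have h0 : ((Polynomial.aeval (Hop g) c.eraseLead) f).coeff (j + c.natDegree * n) = 0 := by
      rcases eraseLead_natDegree_lt_or_eraseLead_eq_zero c with h | h
      · apply coeff_eq_zero_of_natDegree_lt
        refine lt_of_le_of_lt
          (aeval_natDegree_le hn hdeg c.eraseLead.natDegree c.eraseLead le_rfl f) ?_
        have h1 : c.eraseLead.natDegree * n + n ≤ c.natDegree * n := by
          have h2 : (c.eraseLead.natDegree + 1) * n ≤ c.natDegree * n :=
            Nat.mul_le_mul_right n (by omega)
          simpa [add_mul] using h2
        omega
      · rw [h]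
        simp
    rw [h0, zero_add, smul_eq_mul]
    ring

lemma leadingCoeff_g_ne {g : Polynomial ℂ} {n : ℕ} (hn : 1 ≤ n) (hdeg : g.natDegree = n) :
    ((n : ℂ) * g.leadingCoeff) ≠ 0 := by
  have hg : g.leadingCoeff ≠ 0 := by
    rw [Ne, leadingCoeff_eq_zero]
    intro h; rw [h] at hdeg; simp at hdeg; omega
  exact mul_ne_zero (Nat.cast_ne_zero.mpr (by omega)) hg

lemma generation {g : Polynomial ℂ} {n : ℕ} (hn : 1 ≤ n) (hdeg : g.natDegree = n) :
    ∀ m : ℕ, ∀ f : Polynomial ℂ, f.natDegree < m →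
      ∃ c : Fin n → Polynomial ℂ,
        f = ∑ p : Fin n, (Polynomial.aeval (Hop g) (c p)) ((X : Polynomial ℂ) ^ (p : ℕ)) := by
  intro m
  induction m using Nat.strong_induction_on with
  | _ m IH =>
  intro f hf
  by_cases hf0 : f = 0
  · exact ⟨0, by simp [hf0]⟩
  set K : ℂ := (n : ℂ) * g.leadingCoeff with hKdef
  have hK : K ≠ 0 := leadingCoeff_g_ne hn hdeg
  set d : ℕ := f.natDegree / n with hd
  set p : ℕ := f.natDegree % n with hpdef
  have hp : p < n := Nat.mod_lt _ (by omega)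
  have hdp : p + d * n = f.natDegree := Nat.mod_add_div' f.natDegree n
  set a : ℂ := f.leadingCoeff / K ^ d with ha
  set t : Polynomial ℂ := a • (((Hop g) ^ d) ((X : Polynomial ℂ) ^ p)) with htdef
  have hxp : ((X : Polynomial ℂ) ^ p).natDegree ≤ p := by simp [natDegree_X_pow]
  have ht_coeff : t.coeff f.natDegree = f.leadingCoeff := by
    rw [← hdp, htdef, coeff_smul, hop_pow_coeff hn hdeg d _ hxp, coeff_X_pow, if_pos rfl]
    rw [ha, smul_eq_mul]
    field_simp
    rw [hKdef]
  have ht_deg : t.natDegree ≤ f.natDegree := by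
    rw [← hdp, htdef]
    refine (natDegree_smul_le _ _).trans ?_
    refine (hop_pow_natDegree_le hn hdeg d _).trans ?_
    simp [natDegree_X_pow]
  set r : Polynomial ℂ := f - t with hrdef
  have hr_coeff : r.coeff f.natDegree = 0 := by
    rw [hrdef, coeff_sub, ht_coeff, coeff_natDegree, sub_self]
  obtain ⟨c', hc'⟩ : ∃ c' : Fin n → Polynomial ℂ,
      r = ∑ q : Fin n, (Polynomial.aeval (Hop g) (c' q)) ((X : Polynomial ℂ) ^ (q : ℕ)) := by
    by_cases hr0 : r = 0
    · exact ⟨0, by simp [hr0]⟩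
    · have hrle : r.natDegree ≤ f.natDegree :=
        (natDegree_sub_le f t).trans (max_le le_rfl ht_deg)
      have hrlt : r.natDegree < f.natDegree := by
        rcases lt_or_eq_of_le hrle with h | h
        · exact h
        · exfalso
          apply hr0
          rw [← leadingCoeff_eq_zero, leadingCoeff, h, hr_coeff]
      exact IH f.natDegree hf r hrlt
  refine ⟨fun q => c' q + if (q : ℕ) = p then C a * X ^ d else 0, ?_⟩
  have hterm : ∀ q : Fin n,
      (Polynomial.aeval (Hop g) (if (q : ℕ) = p then C a * X ^ d else 0))
          ((X : Polynomial ℂ) ^ (q : ℕ))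
        = if q = ⟨p, hp⟩ then t else 0 := by
    intro q
    by_cases hq : q = ⟨p, hp⟩
    · subst hq
      rw [if_pos rfl, if_pos rfl, aeval_C_mul_X_pow]
    · have hq' : (q : ℕ) ≠ p := fun h => hq (Fin.ext h)
      rw [if_neg hq', if_neg hq, map_zero, LinearMap.zero_apply]
  calc f = r + t := by rw [hrdef]; ring
    _ = ∑ q : Fin n, (Polynomial.aeval (Hop g)
          (c' q + if (q : ℕ) = p then C a * X ^ d else 0)) ((X : Polynomial ℂ) ^ (q : ℕ)) := by
        have : ∀ q : Fin n, (Polynomial.aeval (Hop g)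
            (c' q + if (q : ℕ) = p then C a * X ^ d else 0)) ((X : Polynomial ℂ) ^ (q : ℕ))
            = (Polynomial.aeval (Hop g) (c' q)) ((X : Polynomial ℂ) ^ (q : ℕ))
              + (if q = ⟨p, hp⟩ then t else 0) := by
          intro q
          rw [map_add, LinearMap.add_apply, hterm q]
        rw [Finset.sum_congr rfl (fun q _ => this q), Finset.sum_add_distrib, ← hc',
          Finset.sum_ite_eq' Finset.univ (⟨p, hp⟩ : Fin n) (fun _ => t)]
        simp

theorem free_of_rank_degree (g : Polynomial ℂ) (n : ℕ) (hn : 1 ≤ n)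
    (hdeg : g.natDegree = n) :
    (∀ f : Polynomial ℂ, ∃ c : Fin n → Polynomial ℂ,
        f = ∑ p : Fin n, (Polynomial.aeval (Hop g) (c p)) ((X : Polynomial ℂ) ^ (p : ℕ))) ∧
    (∀ c : Fin n → Polynomial ℂ,
        (∑ p : Fin n, (Polynomial.aeval (Hop g) (c p)) ((X : Polynomial ℂ) ^ (p : ℕ))) = 0
        → ∀ p, c p = 0) := by
  constructor
  · intro f
    exact generation hn hdeg (f.natDegree + 1) f (by omega)
  · intro c hsum p
    by_contra hc
    set K : ℂ := (n : ℂ) * g.leadingCoeff with hKdef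
    have hK : K ≠ 0 := leadingCoeff_g_ne hn hdeg
    set S : Finset (Fin n) := Finset.univ.filter (fun q => c q ≠ 0) with hS
    have hpS : p ∈ S := by simp [hS, hc]
    set D : Fin n → ℕ := fun q => (q : ℕ) + (c q).natDegree * n with hD
    obtain ⟨q0, hq0S, hmax⟩ := Finset.exists_max_image S D ⟨p, hpS⟩
    have hq0 : c q0 ≠ 0 := by
      rw [hS] at hq0S
      exact (Finset.mem_filter.mp hq0S).2
    set N : ℕ := D q0 with hN
    have hinj : ∀ q : Fin n, D q = D q0 → q = q0 := by
      intro q hq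
      have h1 : D q % n = (q : ℕ) := by
        rw [hD]
        simp only
        rw [Nat.add_mul_mod_self_right, Nat.mod_eq_of_lt q.isLt]
      have h2 : D q0 % n = (q0 : ℕ) := by
        rw [hD]
        simp only
        rw [Nat.add_mul_mod_self_right, Nat.mod_eq_of_lt q0.isLt]
      apply Fin.ext
      rw [← h1, ← h2, hq]
    have hcoeffs := congrArg (fun h : Polynomial ℂ => h.coeff N) hsum
    simp only [coeff_zero] at hcoeffs
    rw [finset_sum_coeff] at hcoeffs
    have hzero : ∀ q ∈ Finset.univ, q ≠ q0 →
        ((Polynomial.aeval (Hop g) (c q)) ((X : Polynomial ℂ) ^ (q : ℕ))).coeff N = 0 := by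
      intro q _ hqne
      by_cases hcq : c q = 0
      · simp [hcq]
      · have hqS : q ∈ S := by simp [hS, hcq]
        have hle : D q ≤ N := hmax q hqS
        have hlt : D q < N := lt_of_le_of_ne hle (fun h => hqne (hinj q h))
        apply coeff_eq_zero_of_natDegree_lt
        refine lt_of_le_of_lt
          (aeval_natDegree_le hn hdeg (c q).natDegree (c q) le_rfl _) ?_
        have : ((X : Polynomial ℂ) ^ (q : ℕ)).natDegree = (q : ℕ) := natDegree_X_pow _
        rw [this]
        rw [hD] at hlt
        simp only at hlt
        omega
    rw [Finset.sum_eq_single_of_mem q0 (Finset.mem_univ q0) hzero] at hcoeffs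
    have hxq : ((X : Polynomial ℂ) ^ (q0 : ℕ)).natDegree ≤ (q0 : ℕ) := by
      simp [natDegree_X_pow]
    have hval := aeval_coeff hn hdeg (c q0) ((X : Polynomial ℂ) ^ (q0 : ℕ)) hxq
    rw [coeff_X_pow, if_pos rfl, mul_one] at hval
    have hNidx : N = (q0 : ℕ) + (c q0).natDegree * n := rfl
    rw [hNidx, hval] at hcoeffs
    exact (mul_ne_zero (leadingCoeff_ne_zero.mpr hq0) (pow_ne_zero _ hK)) hcoeffs
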